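/- arXiv:1810.05390 — 12 statements merged into one kernel-verified Lean document; each statement's English description precedes it below -/
import Mathlib

section
/- Let (X, μ1, μ2) be a generalized bitopological space and let i, j ∈ {1,2} with i ≠ j. If a set A ⊆ X is g_{μi}-closed with respect to μj, then cl_{μi}(A) ∖ A contains no nonempty μj-closed set; that is, every μj-closed set F with F ⊆ cl_{μi}(A) ∖ A is empty. -/
open Set

/-- A generalized topology on `X`: contains `∅` and is closed under arbitrary unions. -/
def IsGenTop {X : Type*} (μ : Set (Set X)) : Prop :=
  ∅ ∈ μ ∧ ∀ S ⊆ μ, ⋃₀ S ∈ μ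

/-- `A` is μ-closed iff its complement is μ-open. -/
def gClosedSet {X : Type*} (μ : Set (Set X)) (A : Set X) : Prop := Aᶜ ∈ μ

/-- μ-closure: intersection of all μ-closed sets containing `A`. -/
def gCl {X : Type*} (μ : Set (Set X)) (A : Set X) : Set X :=
  ⋂₀ {F | gClosedSet μ F ∧ A ⊆ F}

/-- `A^∧_μ`: intersection of all μ-open sets containing `A`. -/
def wedgeOp {X : Type*} (μ : Set (Set X)) (A : Set X) : Set X :=
  ⋂₀ {U | U ∈ μ ∧ A ⊆ U}

/-- `A^∨_μ`: union of all μ-closed sets contained in `A`. -/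
def veeOp {X : Type*} (μ : Set (Set X)) (A : Set X) : Set X :=
  ⋃₀ {F | gClosedSet μ F ∧ F ⊆ A}

/-- `L` is a `∧_μ`-set. -/
def IsWedgeSet {X : Type*} (μ : Set (Set X)) (L : Set X) : Prop := L = wedgeOp μ L

/-- `M` is a `∨_μ`-set. -/
def IsVeeSet {X : Type*} (μ : Set (Set X)) (M : Set X) : Prop := M = veeOp μ M

/-- `A` is `g_{μi}`-closed with respect to `μj`. -/
def GClosedWrt {X : Type*} (μi μj : Set (Set X)) (A : Set X) : Prop :=
  ∀ U ∈ μj, A ⊆ U → gCl μi A ⊆ U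

/-- `A` is `g_{μi}`-open with respect to `μj`. -/
def GOpenWrt {X : Type*} (μi μj : Set (Set X)) (A : Set X) : Prop :=
  GClosedWrt μi μj Aᶜ

/-- `A` is `λ_{μi}`-closed with respect to `μj`. -/
def LamClosedWrt {X : Type*} (μi μj : Set (Set X)) (A : Set X) : Prop :=
  ∃ F L : Set X, gClosedSet μi F ∧ IsWedgeSet μj L ∧ A = F ∩ L

/-- `A` is `λ_{μi}`-open with respect to `μj`. -/
def LamOpenWrt {X : Type*} (μi μj : Set (Set X)) (A : Set X) : Prop :=
  LamClosedWrt μi μj Aᶜ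

/-- `A` is pairwise `λ`-closed. -/
def PairwiseLamClosed {X : Type*} (μ1 μ2 : Set (Set X)) (A : Set X) : Prop :=
  ∃ F1 F2 L1 L2 : Set X, gClosedSet μ1 F1 ∧ gClosedSet μ2 F2 ∧
    IsWedgeSet μ1 L1 ∧ IsWedgeSet μ2 L2 ∧ A = (F1 ∩ F2) ∩ (L1 ∩ L2)

def PairwiseT0 {X : Type*} (μ1 μ2 : Set (Set X)) : Prop :=
  ∀ x y : X, x ≠ y →
    (∃ U ∈ μ1, x ∈ U ∧ y ∉ U) ∨ (∃ V ∈ μ2, y ∈ V ∧ x ∉ V)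

def PairwiseT1 {X : Type*} (μ1 μ2 : Set (Set X)) : Prop :=
  ∀ x y : X, x ≠ y →
    (∃ U ∈ μ1, x ∈ U ∧ y ∉ U) ∧ (∃ V ∈ μ2, y ∈ V ∧ x ∉ V)

def PairwiseSymmetric {X : Type*} (μ1 μ2 : Set (Set X)) : Prop :=
  ∀ x y : X, (x ∈ gCl μ1 {y} → y ∈ gCl μ2 {x}) ∧ (x ∈ gCl μ2 {y} → y ∈ gCl μ1 {x})

def PairwiseTHalf {X : Type*} (μ1 μ2 : Set (Set X)) : Prop :=
  (∀ A : Set X, GClosedWrt μ1 μ2 A → gClosedSet μ1 A) ∧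
  (∀ A : Set X, GClosedWrt μ2 μ1 A → gClosedSet μ2 A)

def PairwiseR0 {X : Type*} (μ1 μ2 : Set (Set X)) : Prop :=
  (∀ G ∈ μ1, ∀ x ∈ G, gCl μ2 {x} ⊆ G) ∧ (∀ G ∈ μ2, ∀ x ∈ G, gCl μ1 {x} ⊆ G)

def PairwiseLamSymmetric {X : Type*} (μ1 μ2 : Set (Set X)) : Prop :=
  ∀ A : Set X, PairwiseLamClosed μ1 μ2 A →
    LamClosedWrt μ1 μ2 A ∧ LamClosedWrt μ2 μ1 A

/-- `A` and `B` are μ-weakly separated. -/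
def MuWeaklySeparated {X : Type*} (μ : Set (Set X)) (A B : Set X) : Prop :=
  ∃ U ∈ μ, ∃ V ∈ μ, A ⊆ U ∧ B ⊆ V ∧ A ∩ V = ∅ ∧ B ∩ U = ∅

def PairwiseTQuarter {X : Type*} (μ1 μ2 : Set (Set X)) : Prop :=
  ∀ P : Set X, P.Finite → ∀ y ∉ P,
    ∃ A : Set X, P ⊆ A ∧ y ∉ A ∧
      (A ∈ μ1 ∨ A ∈ μ2 ∨ gClosedSet μ1 A ∨ gClosedSet μ2 A)

def PairwiseTThreeEighths {X : Type*} (μ1 μ2 : Set (Set X)) : Prop :=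
  ∀ P : Set X, P.Countable → ∀ y ∉ P,
    ∃ A : Set X, P ⊆ A ∧ y ∉ A ∧
      (A ∈ μ1 ∨ A ∈ μ2 ∨ gClosedSet μ1 A ∨ gClosedSet μ2 A)

def PairwiseTFiveEighths {X : Type*} (μ1 μ2 : Set (Set X)) : Prop :=
  ∀ P : Set X, ∀ y ∉ P,
    ∃ A : Set X, P ⊆ A ∧ y ∉ A ∧
      (A ∈ μ1 ∨ A ∈ μ2 ∨ gClosedSet μ1 A ∨ gClosedSet μ2 A)
theorem stmt0 {X : Type*} (μ : Fin 2 → Set (Set X)) (hμ : ∀ k, IsGenTop (μ k))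
    (i j : Fin 2) (hij : i ≠ j) (A : Set X)
    (hA : GClosedWrt (μ i) (μ j) A) :
    ∀ F : Set X, gClosedSet (μ j) F → F ⊆ gCl (μ i) A \ A → F = ∅ := by
  intro F hF hsub
  have hAF : A ⊆ Fᶜ := fun x hx hxF => (hsub hxF).2 hx
  have hcl : gCl (μ i) A ⊆ Fᶜ := hA Fᶜ hF hAF
  ext x; simp only [Set.mem_empty_iff_false, iff_false]
  exact fun hx => hcl (hsub hx).1 hx
end

section
/- Let (X, μ1, μ2) be a generalized bitopological space and let i, j ∈ {1,2} with i ≠ j. Suppose that for every pair of μi-closed sets C and D, the union C ∪ D is g_{μi}-closed with respect to μj. Then for every pair of sets A and B that are g_{μi}-closed with respect to μj, the union A ∪ B is g_{μi}-closed with respect to μj. -/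
open Set

lemma gCl_closed {X : Type*} {μ : Set (Set X)} (hμ : IsGenTop μ) (A : Set X) :
    gClosedSet μ (gCl μ A) := by
  unfold gClosedSet gCl
  rw [compl_sInter]
  exact hμ.2 _ (by rintro _ ⟨F, ⟨hF, -⟩, rfl⟩; exact hF)

lemma subset_gCl {X : Type*} (μ : Set (Set X)) (A : Set X) : A ⊆ gCl μ A :=
  fun x hx F hF => hF.2 hx

lemma gCl_mono {X : Type*} (μ : Set (Set X)) {A B : Set X} (hAB : A ⊆ B) :
    gCl μ A ⊆ gCl μ B :=
  fun x hx F hF => hx F ⟨hF.1, hAB.trans hF.2⟩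

theorem stmt1 {X : Type*} (μ : Fin 2 → Set (Set X)) (hμ : ∀ k, IsGenTop (μ k))
    (i j : Fin 2) (hij : i ≠ j)
    (h : ∀ C D : Set X, gClosedSet (μ i) C → gClosedSet (μ i) D →
      GClosedWrt (μ i) (μ j) (C ∪ D)) :
    ∀ A B : Set X, GClosedWrt (μ i) (μ j) A → GClosedWrt (μ i) (μ j) B →
      GClosedWrt (μ i) (μ j) (A ∪ B) := by
  intro A B hA hB U hU hsub
  have hAU : gCl (μ i) A ⊆ U := hA U hU ((subset_union_left).trans hsub)
  have hBU : gCl (μ i) B ⊆ U := hB U hU ((subset_union_right).trans hsub)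
  have h2 := h _ _ (gCl_closed (hμ i) A) (gCl_closed (hμ i) B) U hU (union_subset hAU hBU)
  exact (gCl_mono (μ i) (union_subset_union (subset_gCl _ A) (subset_gCl _ B))).trans h2
end

section
/- Every generalized bitopological space (X, μ1, μ2) that is pairwise T0 and pairwise symmetric is pairwise T1. -/
open Set

lemma not_mem_gCl {X : Type*} (μ : Set (Set X)) (x y : X) :
    x ∉ gCl μ {y} ↔ ∃ U ∈ μ, x ∈ U ∧ y ∉ U := by
  constructor
  · intro h
    simp only [gCl, Set.mem_sInter, not_forall] at h
    obtain ⟨F, ⟨hF, hy⟩, hx⟩ := h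
    exact ⟨Fᶜ, hF, hx, fun hy' => hy' (hy rfl)⟩
  · rintro ⟨U, hU, hx, hy⟩ h
    exact (h Uᶜ ⟨by simpa [gClosedSet] using hU, by simpa using hy⟩) hx

theorem stmt4 {X : Type*} (μ1 μ2 : Set (Set X))
    (h1 : IsGenTop μ1) (h2 : IsGenTop μ2)
    (hT0 : PairwiseT0 μ1 μ2) (hsym : PairwiseSymmetric μ1 μ2) :
    PairwiseT1 μ1 μ2 := by
  intro x y hxy
  rcases hT0 x y hxy with h | h
  · have hx : x ∉ gCl μ1 {y} := (not_mem_gCl μ1 x y).2 h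
    have hy : y ∉ gCl μ2 {x} := fun hc => hx ((hsym y x).2 hc)
    exact ⟨h, (not_mem_gCl μ2 y x).1 hy⟩
  · obtain ⟨V, hV, hyV, hxV⟩ := h
    have hy : y ∉ gCl μ2 {x} := (not_mem_gCl μ2 y x).2 ⟨V, hV, hyV, hxV⟩
    have hx : x ∉ gCl μ1 {y} := fun hc => hy ((hsym x y).1 hc)
    exact ⟨(not_mem_gCl μ1 x y).1 hx, ⟨V, hV, hyV, hxV⟩⟩
end

section
/- Let (X, μ1, μ2) be a generalized bitopological space and let i, j ∈ {1,2} with i ≠ j. Then every singleton {x} (x ∈ X) is either μi-open or μj-closed if and only if every set that is g_{μi}-closed with respect to μj is μi-closed. -/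
open Set

theorem stmt7 {X : Type*} (μ : Fin 2 → Set (Set X)) (hμ : ∀ k, IsGenTop (μ k))
    (i j : Fin 2) (hij : i ≠ j) :
    (∀ x : X, {x} ∈ μ i ∨ gClosedSet (μ j) {x}) ↔
      (∀ A : Set X, GClosedWrt (μ i) (μ j) A → gClosedSet (μ i) A) := by
  constructor
  · intro h A hA
    have hclosed := gCl_closed (hμ i) A
    have hsub : gCl (μ i) A ⊆ A := by
      intro x hx
      by_contra hxA
      rcases h x with hopen | hcl
      · have : x ∈ ({x}ᶜ : Set X) :=
          Set.mem_sInter.mp hx ({x}ᶜ) ⟨show ({x}ᶜ)ᶜ ∈ μ i by simpa,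
            fun y hy => by simp; rintro rfl; exact hxA hy⟩
        simp at this
      · have hU : ({x}ᶜ : Set X) ∈ μ j := hcl
        have := hA _ hU (fun y hy => by simp; rintro rfl; exact hxA hy) hx
        simp at this
    have heq : gCl (μ i) A = A := le_antisymm hsub (subset_gCl _ _)
    rwa [heq] at hclosed
  · intro h x
    by_cases hcl : gClosedSet (μ j) {x}
    · exact Or.inr hcl
    · left
      have hg : GClosedWrt (μ i) (μ j) ({x}ᶜ) := by
        intro U hU hsub
        have hxU : x ∈ U := by
          by_contra hxU
          have hUeq : U = {x}ᶜ :=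
            le_antisymm (fun y hy => by simp; rintro rfl; exact hxU hy) hsub
          rw [hUeq] at hU
          exact hcl hU
        have : U = Set.univ := by
          apply Set.eq_univ_of_forall
          intro y
          by_cases hy : y = x
          · exact hy ▸ hxU
          · exact hsub (by simpa using hy)
        simp [this]
      have := h _ hg
      simpa [gClosedSet] using this
end

section
/- Let (X, μ1, μ2) be a generalized bitopological space and let i, j ∈ {1,2} with i ≠ j. If (A_k)_{k ∈ K} is any family of sets each of which is λ_{μi}-open with respect to μj, then the union ⋃_{k ∈ K} A_k is λ_{μi}-open with respect to μj. -/
open Set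

theorem stmt8 {X : Type*} (μ : Fin 2 → Set (Set X)) (hμ : ∀ k, IsGenTop (μ k))
    (i j : Fin 2) (hij : i ≠ j) {K : Type*} (A : K → Set X)
    (hA : ∀ k : K, LamOpenWrt (μ i) (μ j) (A k)) :
    LamOpenWrt (μ i) (μ j) (⋃ k : K, A k) := by
  choose F L hF hL hFL using hA
  refine ⟨⋂ k, F k, ⋂ k, L k, ?_, ?_, ?_⟩
  · -- complement is a union of μi-open sets
    have : (⋂ k, F k)ᶜ = ⋃₀ (range fun k => (F k)ᶜ) := by
      simp [sUnion_range, compl_iInter]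
    rw [gClosedSet, this]
    exact (hμ i).2 _ (by rintro _ ⟨k, rfl⟩; exact hF k)
  · -- intersection of wedge sets is a wedge set
    refine subset_antisymm ?_ ?_
    · intro x hx
      rw [wedgeOp, mem_sInter]
      exact fun U hU => hU.2 hx
    · intro x hx
      refine mem_iInter.2 fun k => ?_
      have hmono : wedgeOp (μ j) (⋂ k, L k) ⊆ wedgeOp (μ j) (L k) := by
        intro y hy
        rw [wedgeOp, mem_sInter] at hy ⊢
        exact fun U hU => hy U ⟨hU.1, (iInter_subset _ k).trans hU.2⟩
      have := hmono hx
      rwa [← hL k] at this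
  · rw [compl_iUnion]
    ext x
    simp only [mem_iInter, mem_inter_iff]
    constructor
    · intro h
      exact ⟨fun k => ((hFL k ▸ h k) : x ∈ F k ∩ L k).1,
             fun k => ((hFL k ▸ h k) : x ∈ F k ∩ L k).2⟩
    · intro ⟨h1, h2⟩ k
      rw [hFL k]; exact ⟨h1 k, h2 k⟩
end

section
/- Let (X, μ1, μ2) be a generalized bitopological space and let i, j ∈ {1,2} with i ≠ j. The collection of all sets that are λ_{μi}-open with respect to μj is a generalized topology on X (it contains ∅ and is closed under arbitrary unions), and it contains every μi-open set and every ∨_{μj}-set. -/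
open Set

lemma subset_wedgeOp {X : Type*} (μ : Set (Set X)) (A : Set X) : A ⊆ wedgeOp μ A :=
  fun _ hx _ hU => hU.2 hx

lemma wedgeOp_mono {X : Type*} (μ : Set (Set X)) {A B : Set X} (h : A ⊆ B) :
    wedgeOp μ A ⊆ wedgeOp μ B :=
  fun x hx U hU => hx U ⟨hU.1, h.trans hU.2⟩

lemma isWedgeSet_iInter {X ι : Type*} (μ : Set (Set X)) (f : ι → Set X)
    (hf : ∀ s, IsWedgeSet μ (f s)) : IsWedgeSet μ (⋂ s, f s) := by
  refine subset_antisymm (subset_wedgeOp μ _) ?_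
  intro x hx
  refine mem_iInter.2 fun s => ?_
  have := wedgeOp_mono μ (iInter_subset f s) hx
  rwa [← hf s] at this

lemma genTop_iUnion {X ι : Type*} {μ : Set (Set X)} (h : IsGenTop μ) (f : ι → Set X)
    (hf : ∀ s, f s ∈ μ) : (⋃ s, f s) ∈ μ := by
  have := h.2 (Set.range f) (by rintro _ ⟨s, rfl⟩; exact hf s)
  rwa [sUnion_range] at this

theorem stmt9 {X : Type*} (μ : Fin 2 → Set (Set X)) (hμ : ∀ k, IsGenTop (μ k))
    (i j : Fin 2) (hij : i ≠ j) :
    IsGenTop {A : Set X | LamOpenWrt (μ i) (μ j) A} ∧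
    (∀ U ∈ μ i, LamOpenWrt (μ i) (μ j) U) ∧
    (∀ M : Set X, IsVeeSet (μ j) M → LamOpenWrt (μ i) (μ j) M) := by
  have hopen : ∀ U ∈ μ i, LamOpenWrt (μ i) (μ j) U := by
    intro U hU
    refine ⟨U ᶜ, univ, ?_, ?_, by simp⟩
    · simpa [gClosedSet] using hU
    · have h := isWedgeSet_iInter (ι := Empty) (μ j) (fun e => e.elim)
        (fun e => e.elim)
      simpa using h
  refine ⟨⟨hopen ∅ (hμ i).1, ?_⟩, hopen, ?_⟩
  · -- closed under arbitrary unions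
    intro S hS
    choose F L hF hL hEq using fun A (hA : A ∈ S) => hS hA
    refine ⟨⋂ (A : S), F A A.2, ⋂ (A : S), L A A.2, ?_, ?_, ?_⟩
    · show (⋂ (A : S), F A A.2)ᶜ ∈ μ i
      rw [compl_iInter]
      exact genTop_iUnion (hμ i) _ fun A => hF A A.2
    · exact isWedgeSet_iInter _ _ fun A => hL A A.2
    · ext x
      simp only [mem_compl_iff, mem_sUnion, not_exists, mem_inter_iff, mem_iInter]
      constructor
      · intro hx
        constructor <;> intro A <;>
          · have heq := hEq (A : Set X) A.2
            have hxA : x ∈ (A : Set X)ᶜ := fun hxa => hx A ⟨A.2, hxa⟩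
            rw [heq] at hxA
            first | exact hxA.1 | exact hxA.2
      · rintro ⟨h1, h2⟩ A ⟨hA, hxA⟩
        have : x ∈ (A : Set X)ᶜ := by
          rw [hEq A hA]; exact ⟨h1 ⟨A, hA⟩, h2 ⟨A, hA⟩⟩
        exact this hxA
  · -- ∨-sets are λ-open
    intro M hM
    refine ⟨univ, Mᶜ, ?_, ?_, by simp⟩
    · simpa [gClosedSet] using (hμ i).1
    · refine subset_antisymm (subset_wedgeOp _ _) ?_
      intro x hx
      by_contra hxM
      rw [notMem_compl_iff] at hxM
      rw [hM] at hxM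
      obtain ⟨Fc, ⟨hFc, hFM⟩, hxF⟩ := hxM
      have : x ∈ Fcᶜ := hx Fcᶜ ⟨hFc, fun y hy => fun hyF => hy (hFM hyF)⟩
      exact this hxF
end

section
/- Let (X, μ1, μ2) be a generalized bitopological space and let i, j ∈ {1,2} with i ≠ j. A set A ⊆ X is μi-closed if and only if A is both g_{μi}-closed with respect to μj and λ_{μi}-closed with respect to μj. -/
open Set

theorem stmt12 {X : Type*} (μ : Fin 2 → Set (Set X)) (hμ : ∀ k, IsGenTop (μ k))
    (i j : Fin 2) (hij : i ≠ j) (A : Set X) :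
    gClosedSet (μ i) A ↔
      (GClosedWrt (μ i) (μ j) A ∧ LamClosedWrt (μ i) (μ j) A) := by
  constructor
  · intro hA
    have h1 : GClosedWrt (μ i) (μ j) A := by
      intro U _ hAU
      refine subset_trans ?_ hAU
      exact sInter_subset_of_mem ⟨hA, subset_rfl⟩
    refine ⟨h1, A, univ, hA, ?_, (inter_univ A).symm⟩
    apply subset_antisymm
    · intro x _ U hU
      exact hU.2 trivial
    · exact subset_univ _
  · rintro ⟨hg, F, L, hF, hL, rfl⟩
    have hsub : gCl (μ i) (F ∩ L) ⊆ F ∩ L := by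
      intro x hx
      refine ⟨hx F ⟨hF, inter_subset_left⟩, ?_⟩
      rw [hL]
      rintro U ⟨hU, hLU⟩
      exact hg U hU (inter_subset_right.trans hLU) hx
    have heq : gCl (μ i) (F ∩ L) = F ∩ L :=
      subset_antisymm hsub (fun x hx F' hF' => hF'.2 hx)
    have hcl : gClosedSet (μ i) (gCl (μ i) (F ∩ L)) := by
      unfold gClosedSet gCl
      rw [compl_sInter]
      apply (hμ i).2
      rintro G ⟨F', hF', rfl⟩
      exact hF'.1
    rwa [heq] at hcl
end

section
/- If a generalized bitopological space (X, μ1, μ2) is pairwise T1, then every subset A of X is a ∧_{μ1μ2}-set, i.e. A = A^∧_{μ1} ∩ A^∧_{μ2}. -/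
open Set

theorem stmt13 {X : Type*} (μ1 μ2 : Set (Set X))
    (h1 : IsGenTop μ1) (h2 : IsGenTop μ2)
    (hT1 : PairwiseT1 μ1 μ2) :
    ∀ A : Set X, A = wedgeOp μ1 A ∩ wedgeOp μ2 A := by
  intro A
  apply Subset.antisymm
  · intro x hx
    exact ⟨mem_sInter.mpr fun U hU => hU.2 hx, mem_sInter.mpr fun U hU => hU.2 hx⟩
  · intro x hx
    by_contra hxA
    set S : Set (Set X) := {U | U ∈ μ1 ∧ x ∉ U} with hS
    have hU : ⋃₀ S ∈ μ1 := h1.2 S (fun U hU => hU.1)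
    have hAS : A ⊆ ⋃₀ S := by
      intro a ha
      obtain ⟨⟨U, hUμ, haU, hxU⟩, _⟩ := hT1 a x (fun h => hxA (h ▸ ha))
      exact ⟨U, ⟨hUμ, hxU⟩, haU⟩
    have := mem_sInter.mp hx.1 (⋃₀ S) ⟨hU, hAS⟩
    obtain ⟨U, ⟨_, hxU⟩, hxU'⟩ := this
    exact hxU hxU'
end

section
/- If a generalized bitopological space (X, μ1, μ2) is pairwise T_{1/2}, then every subset of X is pairwise λ-closed. -/
open Set

lemma key_lemma {X : Type*} {μi μj : Set (Set X)}
    (hi : ∀ A : Set X, GClosedWrt μi μj A → gClosedSet μi A) (x : X) :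
    {x} ∈ μi ∨ ({x} : Set X)ᶜ ∈ μj := by
  by_cases hc : ({x} : Set X)ᶜ ∈ μj
  · exact Or.inr hc
  · left
    have hg : GClosedWrt μi μj ({x} : Set X)ᶜ := by
      intro U hU hsub
      have hU' : U = Set.univ := by
        by_cases hx : x ∈ U
        · apply Set.eq_univ_of_forall
          intro y
          by_cases hy : y = x
          · exact hy ▸ hx
          · exact hsub (by simpa using hy)
        · exfalso
          apply hc
          have : U = ({x} : Set X)ᶜ :=
            Set.Subset.antisymm (fun y hy hyx => hx (by simpa using hyx ▸ hy)) hsub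
          exact this ▸ hU
      rw [hU']; exact Set.subset_univ _
    have := hi _ hg
    simpa [gClosedSet] using this

theorem stmt14 {X : Type*} (μ1 μ2 : Set (Set X))
    (h1 : IsGenTop μ1) (h2 : IsGenTop μ2)
    (hhalf : PairwiseTHalf μ1 μ2) :
    ∀ A : Set X, PairwiseLamClosed μ1 μ2 A := by
  intro A
  have key1 : ∀ x : X, {x} ∈ μ1 ∨ ({x} : Set X)ᶜ ∈ μ2 := key_lemma hhalf.1
  have key2 : ∀ x : X, {x} ∈ μ2 ∨ ({x} : Set X)ᶜ ∈ μ1 := key_lemma hhalf.2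
  set O1 : Set X := {y | y ∉ A ∧ {y} ∈ μ1} with hO1
  set O2 : Set X := {y | y ∉ A ∧ {y} ∈ μ2} with hO2
  set C : Set X := {y | y ∉ A ∧ ({y} : Set X)ᶜ ∈ μ1} with hC
  have hO1open : O1 ∈ μ1 := by
    have : ⋃₀ {S : Set X | ∃ y ∈ O1, S = {y}} = O1 := by
      ext z; simp only [Set.mem_sUnion, Set.mem_setOf_eq]
      constructor
      · rintro ⟨S, ⟨y, hy, rfl⟩, hz⟩
        simpa using (Set.mem_singleton_iff.mp hz) ▸ hy
      · intro hz; exact ⟨{z}, ⟨z, hz, rfl⟩, rfl⟩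
    rw [← this]
    exact h1.2 _ (by rintro S ⟨y, hy, rfl⟩; exact hy.2)
  have hO2open : O2 ∈ μ2 := by
    have : ⋃₀ {S : Set X | ∃ y ∈ O2, S = {y}} = O2 := by
      ext z; simp only [Set.mem_sUnion, Set.mem_setOf_eq]
      constructor
      · rintro ⟨S, ⟨y, hy, rfl⟩, hz⟩
        simpa using (Set.mem_singleton_iff.mp hz) ▸ hy
      · intro hz; exact ⟨{z}, ⟨z, hz, rfl⟩, rfl⟩
    rw [← this]
    exact h2.2 _ (by rintro S ⟨y, hy, rfl⟩; exact hy.2)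
  refine ⟨O1ᶜ, O2ᶜ, Cᶜ, Set.univ, by simpa [gClosedSet] using hO1open,
    by simpa [gClosedSet] using hO2open, ?_, ?_, ?_⟩
  · -- Cᶜ is a ∧_{μ1}-set
    apply Set.Subset.antisymm
    · intro z hz
      simp only [wedgeOp, Set.mem_sInter, Set.mem_setOf_eq]
      rintro U ⟨hU, hsub⟩
      exact hsub hz
    · intro z hz
      simp only [Set.mem_compl_iff]
      intro hzC
      have h1' : ({z} : Set X)ᶜ ∈ μ1 := hzC.2
      have hsub : Cᶜ ⊆ ({z} : Set X)ᶜ := Set.compl_subset_compl.mpr (by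
        intro w hw; exact (Set.mem_singleton_iff.mp hw) ▸ hzC)
      have := (Set.mem_sInter.mp hz) _ ⟨h1', hsub⟩
      simp at this
  · -- univ is a ∧_{μ2}-set
    apply Set.Subset.antisymm
    · intro z hz
      simp only [wedgeOp, Set.mem_sInter, Set.mem_setOf_eq]
      rintro U ⟨hU, hsub⟩
      exact hsub (Set.mem_univ z)
    · exact Set.subset_univ _
  · ext z
    simp only [Set.mem_inter_iff, Set.mem_compl_iff, Set.mem_univ, and_true]
    constructor
    · intro hz
      exact ⟨⟨fun h => h.1 hz, fun h => h.1 hz⟩, fun h => h.1 hz⟩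
    · rintro ⟨⟨hz1, hz2⟩, hz3⟩
      by_contra hzA
      rcases key1 z with h | h
      · exact hz1 ⟨hzA, h⟩
      · rcases key2 z with h' | h'
        · exact hz2 ⟨hzA, h'⟩
        · exact hz3 ⟨hzA, h'⟩
end

section
/- A generalized bitopological space (X, μ1, μ2) is pairwise T_{1/4} if and only if every finite subset of X is pairwise λ-closed. -/
open Set

lemma gClosed_gCl' {X : Type*} {μ : Set (Set X)} (h : IsGenTop μ) (A : Set X) :
    gClosedSet μ (gCl μ A) := by
  have : (gCl μ A)ᶜ = ⋃₀ (compl '' {F | gClosedSet μ F ∧ A ⊆ F}) := by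
    rw [gCl, Set.compl_sInter]
  rw [gClosedSet, this]
  exact h.2 _ (by rintro _ ⟨F, ⟨hF, _⟩, rfl⟩; exact hF)

lemma wedge_wedge' {X : Type*} (μ : Set (Set X)) (A : Set X) :
    IsWedgeSet μ (wedgeOp μ A) := by
  unfold IsWedgeSet wedgeOp
  apply Set.Subset.antisymm
  · intro x hx U hU
    exact hU.2 hx
  · intro x hx U hU
    exact hx U ⟨hU.1, fun y hy => hy U hU⟩

theorem stmt16 {X : Type*} (μ1 μ2 : Set (Set X))
    (h1 : IsGenTop μ1) (h2 : IsGenTop μ2) :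
    PairwiseTQuarter μ1 μ2 ↔
      ∀ P : Set X, P.Finite → PairwiseLamClosed μ1 μ2 P := by
  constructor
  · intro hT P hP
    refine ⟨gCl μ1 P, gCl μ2 P, wedgeOp μ1 P, wedgeOp μ2 P, gClosed_gCl' h1 P,
      gClosed_gCl' h2 P, wedge_wedge' μ1 P, wedge_wedge' μ2 P, ?_⟩
    apply Set.Subset.antisymm
    · intro x hx
      exact ⟨⟨fun F hF => hF.2 hx, fun F hF => hF.2 hx⟩,
        ⟨fun U hU => hU.2 hx, fun U hU => hU.2 hx⟩⟩
    · intro y hy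
      by_contra hyP
      obtain ⟨A, hPA, hyA, hcase⟩ := hT P hP y hyP
      rcases hcase with h | h | h | h
      · exact hyA (hy.2.1 _ ⟨h, hPA⟩)
      · exact hyA (hy.2.2 _ ⟨h, hPA⟩)
      · exact hyA (hy.1.1 _ ⟨h, hPA⟩)
      · exact hyA (hy.1.2 _ ⟨h, hPA⟩)
  · intro h P hP y hyP
    obtain ⟨F1, F2, L1, L2, hF1, hF2, hL1, hL2, hEq⟩ := h P hP
    have hPF1 : P ⊆ F1 := fun x hx => (hEq ▸ hx).1.1
    have hPF2 : P ⊆ F2 := fun x hx => (hEq ▸ hx).1.2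
    have hPL1 : P ⊆ L1 := fun x hx => (hEq ▸ hx).2.1
    have hPL2 : P ⊆ L2 := fun x hx => (hEq ▸ hx).2.2
    by_cases hy1 : y ∈ F1
    · by_cases hy2 : y ∈ F2
      · by_cases hy3 : y ∈ L1
        · by_cases hy4 : y ∈ L2
          · exact absurd (hEq ▸ ⟨⟨hy1, hy2⟩, hy3, hy4⟩) hyP
          · rw [hL2] at hy4
            simp only [wedgeOp, Set.mem_sInter, Set.mem_setOf_eq, not_forall] at hy4
            obtain ⟨U, ⟨hU, hLU⟩, hyU⟩ := hy4
            exact ⟨U, hPL2.trans hLU, hyU, Or.inr (Or.inl hU)⟩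
        · rw [hL1] at hy3
          simp only [wedgeOp, Set.mem_sInter, Set.mem_setOf_eq, not_forall] at hy3
          obtain ⟨U, ⟨hU, hLU⟩, hyU⟩ := hy3
          exact ⟨U, hPL1.trans hLU, hyU, Or.inl hU⟩
      · exact ⟨F2, hPF2, hy2, Or.inr (Or.inr (Or.inr hF2))⟩
    · exact ⟨F1, hPF1, hy1, Or.inr (Or.inr (Or.inl hF1))⟩
end

section
/- A generalized bitopological space (X, μ1, μ2) is pairwise T_{5/8} if and only if every subset of X is pairwise λ-closed. -/
open Set

lemma myAux_sInter_closed {X : Type*} {μ : Set (Set X)} (h : IsGenTop μ)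
    (S : Set (Set X)) (hS : ∀ B ∈ S, gClosedSet μ B) : gClosedSet μ (⋂₀ S) := by
  unfold gClosedSet
  rw [Set.compl_sInter]
  exact h.2 _ (by rintro _ ⟨B, hB, rfl⟩; exact hS B hB)

lemma myAux_wedge_sInter {X : Type*} {μ : Set (Set X)} (S : Set (Set X)) (hS : S ⊆ μ) :
    IsWedgeSet μ (⋂₀ S) := by
  apply subset_antisymm
  · intro x hx
    exact fun U hU => hU.2 hx
  · intro x hx B hB
    exact hx B ⟨hS hB, fun z hz => hz B hB⟩

theorem stmt18 {X : Type*} (μ1 μ2 : Set (Set X))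
    (h1 : IsGenTop μ1) (h2 : IsGenTop μ2) :
    PairwiseTFiveEighths μ1 μ2 ↔
      ∀ P : Set X, PairwiseLamClosed μ1 μ2 P := by
  constructor
  · intro h P
    classical
    choose A hPA hyA hcat using fun y (hy : y ∉ P) => h P y hy
    set S1 : Set (Set X) := {B | ∃ y, ∃ hy : y ∉ P, gClosedSet μ1 (A y hy) ∧ B = A y hy}
    set S2 : Set (Set X) := {B | ∃ y, ∃ hy : y ∉ P, gClosedSet μ2 (A y hy) ∧ B = A y hy}
    set T1 : Set (Set X) := {B | ∃ y, ∃ hy : y ∉ P, A y hy ∈ μ1 ∧ B = A y hy}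
    set T2 : Set (Set X) := {B | ∃ y, ∃ hy : y ∉ P, A y hy ∈ μ2 ∧ B = A y hy}
    refine ⟨⋂₀ S1, ⋂₀ S2, ⋂₀ T1, ⋂₀ T2, ?_, ?_, ?_, ?_, ?_⟩
    · exact myAux_sInter_closed h1 _ (by rintro _ ⟨y, hy, hc, rfl⟩; exact hc)
    · exact myAux_sInter_closed h2 _ (by rintro _ ⟨y, hy, hc, rfl⟩; exact hc)
    · exact myAux_wedge_sInter _ (by rintro _ ⟨y, hy, hc, rfl⟩; exact hc)
    · exact myAux_wedge_sInter _ (by rintro _ ⟨y, hy, hc, rfl⟩; exact hc)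
    · apply subset_antisymm
      · intro x hx
        refine ⟨⟨?_, ?_⟩, ?_, ?_⟩ <;>
          · rintro _ ⟨y, hy, hc, rfl⟩
            exact hPA y hy hx
      · rintro x ⟨⟨hF1, hF2⟩, hL1, hL2⟩
        by_contra hx
        rcases hcat x hx with hc | hc | hc | hc
        · exact hyA x hx (hL1 _ ⟨x, hx, hc, rfl⟩)
        · exact hyA x hx (hL2 _ ⟨x, hx, hc, rfl⟩)
        · exact hyA x hx (hF1 _ ⟨x, hx, hc, rfl⟩)
        · exact hyA x hx (hF2 _ ⟨x, hx, hc, rfl⟩)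
  · intro h P y hy
    obtain ⟨F1, F2, L1, L2, hF1, hF2, hL1, hL2, hP⟩ := h P
    have hyP : y ∉ (F1 ∩ F2) ∩ (L1 ∩ L2) := hP ▸ hy
    have hsub : ∀ {S : Set X}, (F1 ∩ F2) ∩ (L1 ∩ L2) ⊆ S →
        P ⊆ S := fun hs => hP ▸ hs
    by_cases hy1 : y ∈ F1
    · by_cases hy2 : y ∈ F2
      · by_cases hy3 : y ∈ L1
        · -- y ∉ L2
          have hy4 : y ∉ L2 := fun h4 => hyP ⟨⟨hy1, hy2⟩, hy3, h4⟩
          have : y ∉ wedgeOp μ2 L2 := hL2 ▸ hy4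
          simp only [wedgeOp, mem_sInter, mem_setOf_eq] at this
          push_neg at this
          obtain ⟨U, ⟨hU, hLU⟩, hyU⟩ := this
          exact ⟨U, hsub (fun z hz => hLU hz.2.2), hyU, Or.inr (Or.inl hU)⟩
        · have : y ∉ wedgeOp μ1 L1 := hL1 ▸ hy3
          simp only [wedgeOp, mem_sInter, mem_setOf_eq] at this
          push_neg at this
          obtain ⟨U, ⟨hU, hLU⟩, hyU⟩ := this
          exact ⟨U, hsub (fun z hz => hLU hz.2.1), hyU, Or.inl hU⟩
      · exact ⟨F2, hsub (fun z hz => hz.1.2), hy2, Or.inr (Or.inr (Or.inr hF2))⟩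
    · exact ⟨F1, hsub (fun z hz => hz.1.1), hy1, Or.inr (Or.inr (Or.inl hF1))⟩
end

section
/- Every generalized bitopological space (X, μ1, μ2) that is pairwise T0 and pairwise R0 is pairwise T1. -/
open Set

theorem stmt19 {X : Type*} (μ1 μ2 : Set (Set X))
    (h1 : IsGenTop μ1) (h2 : IsGenTop μ2)
    (hT0 : PairwiseT0 μ1 μ2) (hR0 : PairwiseR0 μ1 μ2) :
    PairwiseT1 μ1 μ2 := by
  intro x y hxy
  rcases hT0 x y hxy with ⟨U, hU, hxU, hyU⟩ | ⟨V, hV, hyV, hxV⟩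
  · refine ⟨⟨U, hU, hxU, hyU⟩, ?_⟩
    have hcl : gCl μ2 {x} ⊆ U := hR0.1 U hU x hxU
    have hy : y ∉ gCl μ2 {x} := fun h => hyU (hcl h)
    simp only [gCl, Set.mem_sInter, Set.mem_setOf_eq, not_forall] at hy
    obtain ⟨F, ⟨hFc, hxF⟩, hyF⟩ := hy
    exact ⟨Fᶜ, hFc, hyF, fun h => h (hxF rfl)⟩
  · refine ⟨?_, ⟨V, hV, hyV, hxV⟩⟩
    have hcl : gCl μ1 {y} ⊆ V := hR0.2 V hV y hyV
    have hx : x ∉ gCl μ1 {y} := fun h => hxV (hcl h)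
    simp only [gCl, Set.mem_sInter, Set.mem_setOf_eq, not_forall] at hx
    obtain ⟨F, ⟨hFc, hyF⟩, hxF⟩ := hx
    exact ⟨Fᶜ, hFc, hxF, fun h => h (hyF rfl)⟩
end
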